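/- Let F_2 be the free group on two generators. For every integer n, there exists a finite subset A of F_2 such that |AA^{-1}| - |A^{-1}A| = 2n. -/

import Mathlib

open scoped Pointwise

open Finset

namespace Stmt3Aux
abbrev F2 := FreeGroup (Fin 2)
def ga : F2 := FreeGroup.of 0
def gb : F2 := FreeGroup.of 1
abbrev X := ℤ × (ℤ →₀ ℤ)
def sig : Equiv.Perm X := (Equiv.addRight (1:ℤ)).prodCongr (Equiv.refl _)
noncomputable def tau : Equiv.Perm X where
  toFun p := (p.1, p.2 + Finsupp.single p.1 1)
  invFun p := (p.1, p.2 - Finsupp.single p.1 1)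
  left_inv p := by simp
  right_inv p := by simp
noncomputable def Phi : F2 →* Equiv.Perm X := FreeGroup.lift ![sig, tau]
lemma Phi_a : Phi ga = sig := by simp [Phi, ga]
lemma Phi_b : Phi gb = tau := by simp [Phi, gb]
lemma sig_apply (p : X) : sig p = (p.1 + 1, p.2) := rfl
lemma siginv_apply (p : X) : sig⁻¹ p = (p.1 - 1, p.2) := by
  simp [sig, Equiv.Perm.inv_def]; rfl
lemma phi_a_zpow (m : ℤ) (p : X) : Phi (ga ^ m) p = (p.1 + m, p.2) := by
  induction m using Int.induction_on generalizing p with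
  | zero => simp
  | succ k ih =>
      rw [zpow_add_one, map_mul, Equiv.Perm.mul_apply, Phi_a, ih]
      simp [sig_apply]; ring
  | pred k ih =>
      rw [zpow_sub_one, map_mul, Equiv.Perm.mul_apply, map_inv, Phi_a, ih]
      simp [siginv_apply]; ring
lemma phi_b_apply (p : X) : Phi gb p = (p.1, p.2 + Finsupp.single p.1 1) := by
  rw [Phi_b]; rfl
lemma phi_binv_apply (p : X) : Phi gb⁻¹ p = (p.1, p.2 - Finsupp.single p.1 1) := by
  rw [map_inv, Phi_b]; rfl


noncomputable def nu (g : F2) : X := Phi g (0, 0)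

lemma phi_ga_apply (p : X) : Phi ga p = (p.1 + 1, p.2) := by rw [Phi_a]; rfl
lemma phi_gainv_apply (p : X) : Phi ga⁻¹ p = (p.1 - 1, p.2) := by
  rw [map_inv, Phi_a, siginv_apply]

-- shape lemmas
lemma nu_pow (k : ℤ) : nu (ga ^ k) = (k, 0) := by
  rw [nu, phi_a_zpow]; norm_num

lemma nu_pbinv (p : ℤ) : nu (ga ^ p * gb⁻¹) = (p, -Finsupp.single 0 1) := by
  rw [nu, map_mul, Equiv.Perm.mul_apply, phi_binv_apply, phi_a_zpow]
  norm_num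

lemma nu_pbinva (p : ℤ) : nu (ga ^ p * gb⁻¹ * ga) = (p + 1, -Finsupp.single 1 1) := by
  rw [nu, map_mul, map_mul, Equiv.Perm.mul_apply, Equiv.Perm.mul_apply,
    phi_ga_apply, phi_binv_apply, phi_a_zpow]
  norm_num
  ring

lemma nu_bq (k : ℤ) : nu (gb * ga ^ k) = (k, Finsupp.single k 1) := by
  rw [nu, map_mul, Equiv.Perm.mul_apply, phi_a_zpow, phi_b_apply]
  norm_num

lemma nu_abq (k : ℤ) : nu (ga⁻¹ * gb * ga ^ k) = (k - 1, Finsupp.single k 1) := by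
  rw [nu, map_mul, map_mul, Equiv.Perm.mul_apply, Equiv.Perm.mul_apply,
    phi_a_zpow, phi_b_apply, phi_gainv_apply]
  norm_num

lemma nu_bqb (k : ℤ) : nu (gb * ga ^ k * gb⁻¹) = (k, Finsupp.single k 1 - Finsupp.single 0 1) := by
  rw [nu, map_mul, map_mul, Equiv.Perm.mul_apply, Equiv.Perm.mul_apply,
    phi_binv_apply, phi_a_zpow, phi_b_apply]
  norm_num
  abel

lemma nu_one : nu 1 = (0, 0) := by simp [nu]
lemma nu_ga : nu ga = (1, 0) := by rw [nu, phi_ga_apply]; norm_num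
lemma nu_gainv : nu ga⁻¹ = (-1, 0) := by rw [nu, phi_gainv_apply]; norm_num
lemma nu_binv : nu gb⁻¹ = (0, -Finsupp.single 0 1) := by
  rw [nu, phi_binv_apply]; norm_num


/-! ## Sets -/

noncomputable def Aset (n : ℤ) : Finset F2 :=
  {1, ga⁻¹} ∪ (Icc (-1:ℤ) n).image (fun j => ga ^ j * gb⁻¹)

noncomputable def Rset (n : ℤ) : Finset F2 :=
  ((Icc (-(n+1)) (n+1)).image fun k => ga ^ k)
  ∪ ((Icc (-1:ℤ) n).image fun j => gb * ga ^ (-j))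
  ∪ ((Icc (-1:ℤ) n).image fun j => ga⁻¹ * gb * ga ^ (-j))
  ∪ ((Icc (-1:ℤ) n).image fun j => ga ^ j * gb⁻¹)
  ∪ ((Icc (-1:ℤ) n).image fun j => ga ^ j * gb⁻¹ * ga)

noncomputable def Lset (n : ℤ) : Finset F2 :=
  ({1, ga, ga⁻¹} : Finset F2)
  ∪ ((Icc (-1:ℤ) (n+1)).image fun k => ga ^ k * gb⁻¹)
  ∪ ((Icc (-(n+1)) (1:ℤ)).image fun k => gb * ga ^ k)
  ∪ (((Icc (-(n+1)) (n+1)).erase 0).image fun k => gb * ga ^ k * gb⁻¹)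

lemma mem_Aset {n : ℤ} {x : F2} :
    x ∈ Aset n ↔ x = 1 ∨ x = ga⁻¹ ∨ ∃ j, (-1 ≤ j ∧ j ≤ n) ∧ ga ^ j * gb⁻¹ = x := by
  simp [Aset, Finset.mem_union, Finset.mem_image, Finset.mem_Icc, Finset.mem_insert,
    Finset.mem_singleton, or_assoc]

lemma one_mem_A {n : ℤ} : (1:F2) ∈ Aset n := mem_Aset.2 (Or.inl rfl)
lemma ainv_mem_A {n : ℤ} : ga⁻¹ ∈ Aset n := mem_Aset.2 (Or.inr (Or.inl rfl))
lemma jb_mem_A {n j : ℤ} (h1 : -1 ≤ j) (h2 : j ≤ n) : ga ^ j * gb⁻¹ ∈ Aset n :=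
  mem_Aset.2 (Or.inr (Or.inr ⟨j, ⟨h1, h2⟩, rfl⟩))

lemma mem_mulinv_iff {s : Finset F2} {x : F2} :
    x ∈ s * s⁻¹ ↔ ∃ y ∈ s, ∃ w ∈ s, y * w⁻¹ = x := by
  rw [Finset.mem_mul]
  constructor
  · rintro ⟨y, hy, z, hz, rfl⟩
    rw [Finset.mem_inv] at hz
    obtain ⟨w, hw, rfl⟩ := hz
    exact ⟨y, hy, w, hw, rfl⟩
  · rintro ⟨y, hy, w, hw, rfl⟩
    exact ⟨y, hy, w⁻¹, Finset.inv_mem_inv hw, rfl⟩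

lemma mem_invmul_iff {s : Finset F2} {x : F2} :
    x ∈ s⁻¹ * s ↔ ∃ y ∈ s, ∃ w ∈ s, y⁻¹ * w = x := by
  rw [Finset.mem_mul]
  constructor
  · rintro ⟨z, hz, w, hw, rfl⟩
    rw [Finset.mem_inv] at hz
    obtain ⟨y, hy, rfl⟩ := hz
    exact ⟨y, hy, w, hw, rfl⟩
  · rintro ⟨y, hy, w, hw, rfl⟩
    exact ⟨y⁻¹, Finset.inv_mem_inv hy, w, hw, rfl⟩

-- membership helpers for Rset
lemma mem_R0 {n k : ℤ} (h1 : -(n+1) ≤ k) (h2 : k ≤ n+1) : ga ^ k ∈ Rset n := by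
  simp only [Rset, Finset.mem_union]
  exact Or.inl <| Or.inl <| Or.inl <| Or.inl <|
    Finset.mem_image.2 ⟨k, Finset.mem_Icc.2 ⟨h1, h2⟩, rfl⟩
lemma mem_R1 {n j : ℤ} (h1 : -1 ≤ j) (h2 : j ≤ n) : gb * ga ^ (-j) ∈ Rset n := by
  simp only [Rset, Finset.mem_union]
  exact Or.inl <| Or.inl <| Or.inl <| Or.inr <|
    Finset.mem_image.2 ⟨j, Finset.mem_Icc.2 ⟨h1, h2⟩, rfl⟩
lemma mem_R2 {n j : ℤ} (h1 : -1 ≤ j) (h2 : j ≤ n) : ga⁻¹ * gb * ga ^ (-j) ∈ Rset n := by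
  simp only [Rset, Finset.mem_union]
  exact Or.inl <| Or.inl <| Or.inr <|
    Finset.mem_image.2 ⟨j, Finset.mem_Icc.2 ⟨h1, h2⟩, rfl⟩
lemma mem_R3 {n j : ℤ} (h1 : -1 ≤ j) (h2 : j ≤ n) : ga ^ j * gb⁻¹ ∈ Rset n := by
  simp only [Rset, Finset.mem_union]
  exact Or.inl <| Or.inr <|
    Finset.mem_image.2 ⟨j, Finset.mem_Icc.2 ⟨h1, h2⟩, rfl⟩
lemma mem_R4 {n j : ℤ} (h1 : -1 ≤ j) (h2 : j ≤ n) : ga ^ j * gb⁻¹ * ga ∈ Rset n := by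
  simp only [Rset, Finset.mem_union]
  exact Or.inr <| Finset.mem_image.2 ⟨j, Finset.mem_Icc.2 ⟨h1, h2⟩, rfl⟩

-- membership helpers for Lset
lemma mem_L0 {n : ℤ} {x : F2} (h : x = 1 ∨ x = ga ∨ x = ga⁻¹) : x ∈ Lset n := by
  simp only [Lset, Finset.mem_union]
  refine Or.inl <| Or.inl <| Or.inl ?_
  simp only [Finset.mem_insert, Finset.mem_singleton]
  tauto
lemma mem_L1 {n k : ℤ} (h1 : -1 ≤ k) (h2 : k ≤ n+1) : ga ^ k * gb⁻¹ ∈ Lset n := by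
  simp only [Lset, Finset.mem_union]
  exact Or.inl <| Or.inl <| Or.inr <|
    Finset.mem_image.2 ⟨k, Finset.mem_Icc.2 ⟨h1, h2⟩, rfl⟩
lemma mem_L2 {n k : ℤ} (h1 : -(n+1) ≤ k) (h2 : k ≤ 1) : gb * ga ^ k ∈ Lset n := by
  simp only [Lset, Finset.mem_union]
  exact Or.inl <| Or.inr <|
    Finset.mem_image.2 ⟨k, Finset.mem_Icc.2 ⟨h1, h2⟩, rfl⟩
lemma mem_L3 {n k : ℤ} (h0 : k ≠ 0) (h1 : -(n+1) ≤ k) (h2 : k ≤ n+1) :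
    gb * ga ^ k * gb⁻¹ ∈ Lset n := by
  simp only [Lset, Finset.mem_union]
  exact Or.inr <| Finset.mem_image.2
    ⟨k, Finset.mem_erase.2 ⟨h0, Finset.mem_Icc.2 ⟨h1, h2⟩⟩, rfl⟩


lemma mulinv_eq {n : ℤ} (hn : 0 ≤ n) : Aset n * (Aset n)⁻¹ = Rset n := by
  apply Finset.Subset.antisymm
  · intro x hx
    obtain ⟨y, hy, w, hw, rfl⟩ := mem_mulinv_iff.1 hx
    rcases mem_Aset.1 hy with rfl | rfl | ⟨i, ⟨hi1, hi2⟩, rfl⟩ <;>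
      rcases mem_Aset.1 hw with rfl | rfl | ⟨j, ⟨hj1, hj2⟩, rfl⟩
    · have h : (1:F2) * (1:F2)⁻¹ = ga ^ (0:ℤ) := by group
      rw [h]; exact mem_R0 (by omega) (by omega)
    · have h : (1:F2) * (ga⁻¹)⁻¹ = ga ^ (1:ℤ) := by group
      rw [h]; exact mem_R0 (by omega) (by omega)
    · have h : (1:F2) * (ga ^ j * gb⁻¹)⁻¹ = gb * ga ^ (-j) := by group
      rw [h]; exact mem_R1 hj1 hj2
    · have h : ga⁻¹ * (1:F2)⁻¹ = ga ^ (-1:ℤ) := by group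
      rw [h]; exact mem_R0 (by omega) (by omega)
    · have h : ga⁻¹ * (ga⁻¹)⁻¹ = ga ^ (0:ℤ) := by group
      rw [h]; exact mem_R0 (by omega) (by omega)
    · have h : ga⁻¹ * (ga ^ j * gb⁻¹)⁻¹ = ga⁻¹ * gb * ga ^ (-j) := by group
      rw [h]; exact mem_R2 hj1 hj2
    · have h : (ga ^ i * gb⁻¹) * (1:F2)⁻¹ = ga ^ i * gb⁻¹ := by group
      rw [h]; exact mem_R3 hi1 hi2
    · have h : (ga ^ i * gb⁻¹) * (ga⁻¹)⁻¹ = ga ^ i * gb⁻¹ * ga := by group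
      rw [h]; exact mem_R4 hi1 hi2
    · have h : (ga ^ i * gb⁻¹) * (ga ^ j * gb⁻¹)⁻¹ = ga ^ (i - j) := by group
      rw [h]; exact mem_R0 (by omega) (by omega)
  · intro x hx
    simp only [Rset, Finset.mem_union, Finset.mem_image, Finset.mem_Icc] at hx
    rw [mem_mulinv_iff]
    rcases hx with ((((⟨k, ⟨hk1, hk2⟩, rfl⟩ | ⟨j, ⟨hj1, hj2⟩, rfl⟩) | ⟨j, ⟨hj1, hj2⟩, rfl⟩) |
        ⟨j, ⟨hj1, hj2⟩, rfl⟩) | ⟨j, ⟨hj1, hj2⟩, rfl⟩)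
    · rcases le_or_gt 0 k with hk | hk
      · exact ⟨ga ^ (k-1) * gb⁻¹, jb_mem_A (by omega) (by omega),
          ga ^ (-1:ℤ) * gb⁻¹, jb_mem_A (by omega) (by omega), by group⟩
      · exact ⟨ga ^ (-1:ℤ) * gb⁻¹, jb_mem_A (by omega) (by omega),
          ga ^ (-1-k) * gb⁻¹, jb_mem_A (by omega) (by omega), by group⟩
    · exact ⟨1, one_mem_A, ga ^ j * gb⁻¹, jb_mem_A hj1 hj2, by group⟩
    · exact ⟨ga⁻¹, ainv_mem_A, ga ^ j * gb⁻¹, jb_mem_A hj1 hj2, by group⟩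
    · exact ⟨ga ^ j * gb⁻¹, jb_mem_A hj1 hj2, 1, one_mem_A, by group⟩
    · exact ⟨ga ^ j * gb⁻¹, jb_mem_A hj1 hj2, ga⁻¹, ainv_mem_A, by group⟩

lemma invmul_eq {n : ℤ} (hn : 0 ≤ n) : (Aset n)⁻¹ * Aset n = Lset n := by
  apply Finset.Subset.antisymm
  · intro x hx
    obtain ⟨y, hy, w, hw, rfl⟩ := mem_invmul_iff.1 hx
    rcases mem_Aset.1 hy with rfl | rfl | ⟨i, ⟨hi1, hi2⟩, rfl⟩ <;>
      rcases mem_Aset.1 hw with rfl | rfl | ⟨j, ⟨hj1, hj2⟩, rfl⟩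
    · exact mem_L0 (Or.inl (by group))
    · exact mem_L0 (Or.inr (Or.inr (by group)))
    · have h : (1:F2)⁻¹ * (ga ^ j * gb⁻¹) = ga ^ j * gb⁻¹ := by group
      rw [h]; exact mem_L1 hj1 (by omega)
    · exact mem_L0 (Or.inr (Or.inl (by group)))
    · exact mem_L0 (Or.inl (by group))
    · have h : (ga⁻¹)⁻¹ * (ga ^ j * gb⁻¹) = ga ^ (j+1) * gb⁻¹ := by group
      rw [h]; exact mem_L1 (by omega) (by omega)
    · have h : (ga ^ i * gb⁻¹)⁻¹ * (1:F2) = gb * ga ^ (-i) := by group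
      rw [h]; exact mem_L2 (by omega) (by omega)
    · have h : (ga ^ i * gb⁻¹)⁻¹ * ga⁻¹ = gb * ga ^ (-i-1) := by group
      rw [h]; exact mem_L2 (by omega) (by omega)
    · rcases eq_or_ne i j with rfl | hij
      · have h : (ga ^ i * gb⁻¹)⁻¹ * (ga ^ i * gb⁻¹) = 1 := by group
        rw [h]; exact mem_L0 (Or.inl rfl)
      · have h : (ga ^ i * gb⁻¹)⁻¹ * (ga ^ j * gb⁻¹) = gb * ga ^ (j-i) * gb⁻¹ := by group
        rw [h]; exact mem_L3 (by omega) (by omega) (by omega)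
  · intro x hx
    simp only [Lset, Finset.mem_union, Finset.mem_image, Finset.mem_Icc, Finset.mem_erase,
      Finset.mem_insert, Finset.mem_singleton] at hx
    rw [mem_invmul_iff]
    rcases hx with (((rfl | rfl | rfl) | ⟨k, ⟨hk1, hk2⟩, rfl⟩) | ⟨k, ⟨hk1, hk2⟩, rfl⟩) |
        ⟨k, ⟨hk0, hk1, hk2⟩, rfl⟩
    · exact ⟨1, one_mem_A, 1, one_mem_A, by group⟩
    · exact ⟨ga⁻¹, ainv_mem_A, 1, one_mem_A, by group⟩
    · exact ⟨1, one_mem_A, ga⁻¹, ainv_mem_A, by group⟩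
    · rcases le_or_gt k n with hk | hk
      · exact ⟨1, one_mem_A, ga ^ k * gb⁻¹, jb_mem_A hk1 hk, by group⟩
      · exact ⟨ga⁻¹, ainv_mem_A, ga ^ (k-1) * gb⁻¹, jb_mem_A (by omega) (by omega), by group⟩
    · rcases le_or_gt (-n) k with hk | hk
      · exact ⟨ga ^ (-k) * gb⁻¹, jb_mem_A (by omega) (by omega), 1, one_mem_A, by group⟩
      · exact ⟨ga ^ (-k-1) * gb⁻¹, jb_mem_A (by omega) (by omega), ga⁻¹, ainv_mem_A, by group⟩
    · rcases le_or_gt 0 k with hk | hk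
      · exact ⟨ga ^ (-1:ℤ) * gb⁻¹, jb_mem_A (by omega) (by omega),
          ga ^ (k-1) * gb⁻¹, jb_mem_A (by omega) (by omega), by group⟩
      · exact ⟨ga ^ (-1-k) * gb⁻¹, jb_mem_A (by omega) (by omega),
          ga ^ (-1:ℤ) * gb⁻¹, jb_mem_A (by omega) (by omega), by group⟩


/-! ## Finsupp helpers -/

lemma fs_eval {f g : ℤ →₀ ℤ} (h : f = g) (c : ℤ) : f c = g c := DFunLike.congr_fun h c

lemma single_eq_single {k l : ℤ} (h : Finsupp.single k (1:ℤ) = Finsupp.single l 1) : k = l := by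
  have h2 := fs_eval h k
  simp only [Finsupp.single_apply] at h2
  split_ifs at h2 <;> omega

/-! ## Injectivity of index maps (via first component of nu) -/

lemma inj_pow : Function.Injective (fun k : ℤ => ga ^ k) := by
  intro k l h
  have := congrArg nu h
  rw [nu_pow, nu_pow, Prod.mk.injEq] at this
  exact this.1

lemma inj_R1 : Function.Injective (fun j : ℤ => gb * ga ^ (-j)) := by
  intro k l h
  have := congrArg nu h
  rw [nu_bq, nu_bq, Prod.mk.injEq] at this
  omega

lemma inj_R2 : Function.Injective (fun j : ℤ => ga⁻¹ * gb * ga ^ (-j)) := by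
  intro k l h
  have := congrArg nu h
  rw [nu_abq, nu_abq, Prod.mk.injEq] at this
  omega

lemma inj_R3 : Function.Injective (fun j : ℤ => ga ^ j * gb⁻¹) := by
  intro k l h
  have := congrArg nu h
  rw [nu_pbinv, nu_pbinv, Prod.mk.injEq] at this
  exact this.1

lemma inj_R4 : Function.Injective (fun j : ℤ => ga ^ j * gb⁻¹ * ga) := by
  intro k l h
  have := congrArg nu h
  rw [nu_pbinva, nu_pbinva, Prod.mk.injEq] at this
  omega

lemma inj_L2 : Function.Injective (fun k : ℤ => gb * ga ^ k) := by
  intro k l h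
  have := congrArg nu h
  rw [nu_bq, nu_bq, Prod.mk.injEq] at this
  exact this.1

lemma inj_L3 : Function.Injective (fun k : ℤ => gb * ga ^ k * gb⁻¹) := by
  intro k l h
  have := congrArg nu h
  rw [nu_bqb, nu_bqb, Prod.mk.injEq] at this
  exact this.1

/-! ## Cardinality of Rset -/

lemma card_R {n : ℤ} (hn : 0 ≤ n) : ((Rset n).card : ℤ) = 6 * n + 11 := by
  have h01 : Disjoint ((Icc (-(n+1)) (n+1)).image fun k => ga ^ k)
      ((Icc (-1:ℤ) n).image fun j => gb * ga ^ (-j)) := by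
    simp only [Finset.disjoint_left, Finset.mem_image, Finset.mem_Icc]
    rintro x ⟨k, hk, rfl⟩ ⟨j, hj, hx⟩
    have h := congrArg nu hx
    rw [nu_bq, nu_pow, Prod.mk.injEq] at h
    have h2 := fs_eval h.2 (-j)
    simp [Finsupp.single_apply] at h2
  have h02 : Disjoint ((Icc (-(n+1)) (n+1)).image fun k => ga ^ k)
      ((Icc (-1:ℤ) n).image fun j => ga⁻¹ * gb * ga ^ (-j)) := by
    simp only [Finset.disjoint_left, Finset.mem_image, Finset.mem_Icc]
    rintro x ⟨k, hk, rfl⟩ ⟨j, hj, hx⟩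
    have h := congrArg nu hx
    rw [nu_abq, nu_pow, Prod.mk.injEq] at h
    have h2 := fs_eval h.2 (-j)
    simp [Finsupp.single_apply] at h2
  have h03 : Disjoint ((Icc (-(n+1)) (n+1)).image fun k => ga ^ k)
      ((Icc (-1:ℤ) n).image fun j => ga ^ j * gb⁻¹) := by
    simp only [Finset.disjoint_left, Finset.mem_image, Finset.mem_Icc]
    rintro x ⟨k, hk, rfl⟩ ⟨j, hj, hx⟩
    have h := congrArg nu hx
    rw [nu_pbinv, nu_pow, Prod.mk.injEq] at h
    exact one_ne_zero (Finsupp.single_eq_zero.mp (neg_eq_zero.mp h.2))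
  have h04 : Disjoint ((Icc (-(n+1)) (n+1)).image fun k => ga ^ k)
      ((Icc (-1:ℤ) n).image fun j => ga ^ j * gb⁻¹ * ga) := by
    simp only [Finset.disjoint_left, Finset.mem_image, Finset.mem_Icc]
    rintro x ⟨k, hk, rfl⟩ ⟨j, hj, hx⟩
    have h := congrArg nu hx
    rw [nu_pbinva, nu_pow, Prod.mk.injEq] at h
    exact one_ne_zero (Finsupp.single_eq_zero.mp (neg_eq_zero.mp h.2))
  have h12 : Disjoint ((Icc (-1:ℤ) n).image fun j => gb * ga ^ (-j))
      ((Icc (-1:ℤ) n).image fun j => ga⁻¹ * gb * ga ^ (-j)) := by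
    simp only [Finset.disjoint_left, Finset.mem_image, Finset.mem_Icc]
    rintro x ⟨k, hk, rfl⟩ ⟨j, hj, hx⟩
    have h := congrArg nu hx
    rw [nu_abq, nu_bq, Prod.mk.injEq] at h
    have h2 := fs_eval h.2 (-j)
    simp only [Finsupp.single_apply] at h2
    split_ifs at h2 <;> omega
  have h13 : Disjoint ((Icc (-1:ℤ) n).image fun j => gb * ga ^ (-j))
      ((Icc (-1:ℤ) n).image fun j => ga ^ j * gb⁻¹) := by
    simp only [Finset.disjoint_left, Finset.mem_image, Finset.mem_Icc]
    rintro x ⟨k, hk, rfl⟩ ⟨j, hj, hx⟩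
    have h := congrArg nu hx
    rw [nu_pbinv, nu_bq, Prod.mk.injEq] at h
    have h2 := fs_eval h.2 (-k)
    simp only [Finsupp.single_apply, Finsupp.neg_apply] at h2
    split_ifs at h2 <;> omega
  have h14 : Disjoint ((Icc (-1:ℤ) n).image fun j => gb * ga ^ (-j))
      ((Icc (-1:ℤ) n).image fun j => ga ^ j * gb⁻¹ * ga) := by
    simp only [Finset.disjoint_left, Finset.mem_image, Finset.mem_Icc]
    rintro x ⟨k, hk, rfl⟩ ⟨j, hj, hx⟩
    have h := congrArg nu hx
    rw [nu_pbinva, nu_bq, Prod.mk.injEq] at h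
    have h2 := fs_eval h.2 (-k)
    simp only [Finsupp.single_apply, Finsupp.neg_apply] at h2
    split_ifs at h2 <;> omega
  have h23 : Disjoint ((Icc (-1:ℤ) n).image fun j => ga⁻¹ * gb * ga ^ (-j))
      ((Icc (-1:ℤ) n).image fun j => ga ^ j * gb⁻¹) := by
    simp only [Finset.disjoint_left, Finset.mem_image, Finset.mem_Icc]
    rintro x ⟨k, hk, rfl⟩ ⟨j, hj, hx⟩
    have h := congrArg nu hx
    rw [nu_pbinv, nu_abq, Prod.mk.injEq] at h
    have h2 := fs_eval h.2 (-k)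
    simp only [Finsupp.single_apply, Finsupp.neg_apply] at h2
    split_ifs at h2 <;> omega
  have h24 : Disjoint ((Icc (-1:ℤ) n).image fun j => ga⁻¹ * gb * ga ^ (-j))
      ((Icc (-1:ℤ) n).image fun j => ga ^ j * gb⁻¹ * ga) := by
    simp only [Finset.disjoint_left, Finset.mem_image, Finset.mem_Icc]
    rintro x ⟨k, hk, rfl⟩ ⟨j, hj, hx⟩
    have h := congrArg nu hx
    rw [nu_pbinva, nu_abq, Prod.mk.injEq] at h
    have h2 := fs_eval h.2 (-k)
    simp only [Finsupp.single_apply, Finsupp.neg_apply] at h2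
    split_ifs at h2 <;> omega
  have h34 : Disjoint ((Icc (-1:ℤ) n).image fun j => ga ^ j * gb⁻¹)
      ((Icc (-1:ℤ) n).image fun j => ga ^ j * gb⁻¹ * ga) := by
    simp only [Finset.disjoint_left, Finset.mem_image, Finset.mem_Icc]
    rintro x ⟨k, hk, rfl⟩ ⟨j, hj, hx⟩
    have h := congrArg nu hx
    rw [nu_pbinva, nu_pbinv, Prod.mk.injEq] at h
    have h2 := fs_eval h.2 1
    simp only [Finsupp.single_apply, Finsupp.neg_apply] at h2
    split_ifs at h2 <;> omega
  have c0 : (((Icc (-(n+1)) (n+1)).image fun k => ga ^ k).card : ℤ) = 2*n+3 := by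
    rw [Finset.card_image_of_injective _ inj_pow, Int.card_Icc]
    omega
  have c1 : (((Icc (-1:ℤ) n).image fun j => gb * ga ^ (-j)).card : ℤ) = n+2 := by
    rw [Finset.card_image_of_injective _ inj_R1, Int.card_Icc]
    omega
  have c2 : (((Icc (-1:ℤ) n).image fun j => ga⁻¹ * gb * ga ^ (-j)).card : ℤ) = n+2 := by
    rw [Finset.card_image_of_injective _ inj_R2, Int.card_Icc]
    omega
  have c3 : (((Icc (-1:ℤ) n).image fun j => ga ^ j * gb⁻¹).card : ℤ) = n+2 := by
    rw [Finset.card_image_of_injective _ inj_R3, Int.card_Icc]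
    omega
  have c4 : (((Icc (-1:ℤ) n).image fun j => ga ^ j * gb⁻¹ * ga).card : ℤ) = n+2 := by
    rw [Finset.card_image_of_injective _ inj_R4, Int.card_Icc]
    omega
  rw [Rset]
  rw [Finset.card_union_of_disjoint (by
        simp only [Finset.disjoint_union_left]
        exact ⟨⟨⟨h04, h14⟩, h24⟩, h34⟩),
      Finset.card_union_of_disjoint (by
        simp only [Finset.disjoint_union_left]
        exact ⟨⟨h03, h13⟩, h23⟩),
      Finset.card_union_of_disjoint (by
        simp only [Finset.disjoint_union_left]
        exact ⟨h02, h12⟩),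
      Finset.card_union_of_disjoint h01]
  push_cast
  omega


/-! ## Cardinality of Lset -/

lemma ne_one_ga : (1:F2) ≠ ga := by
  intro h; have := congrArg nu h; rw [nu_one, nu_ga, Prod.mk.injEq] at this; omega
lemma ne_one_gainv : (1:F2) ≠ ga⁻¹ := by
  intro h; have := congrArg nu h; rw [nu_one, nu_gainv, Prod.mk.injEq] at this; omega
lemma ne_ga_gainv : ga ≠ ga⁻¹ := by
  intro h; have := congrArg nu h; rw [nu_ga, nu_gainv, Prod.mk.injEq] at this; omega

lemma nu_L0 {x : F2} (h : x = 1 ∨ x = ga ∨ x = ga⁻¹) : (nu x).2 = 0 := by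
  rcases h with rfl | rfl | rfl
  · rw [nu_one]
  · rw [nu_ga]
  · rw [nu_gainv]

lemma card_L {n : ℤ} (hn : 0 ≤ n) : ((Lset n).card : ℤ) = 4 * n + 11 := by
  have h01 : Disjoint ({1, ga, ga⁻¹} : Finset F2)
      ((Icc (-1:ℤ) (n+1)).image fun k => ga ^ k * gb⁻¹) := by
    simp only [Finset.disjoint_left, Finset.mem_image, Finset.mem_Icc,
      Finset.mem_insert, Finset.mem_singleton]
    rintro x hx0 ⟨k, hk, hx⟩
    have h := congrArg Prod.snd (congrArg nu hx)
    rw [nu_L0 hx0] at h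
    rw [nu_pbinv] at h
    exact one_ne_zero (Finsupp.single_eq_zero.mp (neg_eq_zero.mp h))
  have h02 : Disjoint ({1, ga, ga⁻¹} : Finset F2)
      ((Icc (-(n+1)) (1:ℤ)).image fun k => gb * ga ^ k) := by
    simp only [Finset.disjoint_left, Finset.mem_image, Finset.mem_Icc,
      Finset.mem_insert, Finset.mem_singleton]
    rintro x hx0 ⟨k, hk, hx⟩
    have h := congrArg Prod.snd (congrArg nu hx)
    rw [nu_L0 hx0, nu_bq] at h
    exact one_ne_zero (Finsupp.single_eq_zero.mp h)
  have h03 : Disjoint ({1, ga, ga⁻¹} : Finset F2)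
      (((Icc (-(n+1)) (n+1)).erase 0).image fun k => gb * ga ^ k * gb⁻¹) := by
    simp only [Finset.disjoint_left, Finset.mem_image, Finset.mem_erase, Finset.mem_Icc,
      Finset.mem_insert, Finset.mem_singleton]
    rintro x hx0 ⟨k, ⟨hk0, hk⟩, hx⟩
    have h := congrArg Prod.snd (congrArg nu hx)
    rw [nu_L0 hx0, nu_bqb] at h
    have h2 := fs_eval h k
    simp only [Finsupp.single_apply, Finsupp.sub_apply, Finsupp.coe_zero, Pi.zero_apply] at h2
    split_ifs at h2 <;> omega
  have h12 : Disjoint ((Icc (-1:ℤ) (n+1)).image fun k => ga ^ k * gb⁻¹)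
      ((Icc (-(n+1)) (1:ℤ)).image fun k => gb * ga ^ k) := by
    simp only [Finset.disjoint_left, Finset.mem_image, Finset.mem_Icc]
    rintro x ⟨k, hk, rfl⟩ ⟨j, hj, hx⟩
    have h := congrArg nu hx
    rw [nu_bq, nu_pbinv, Prod.mk.injEq] at h
    have h2 := fs_eval h.2 j
    simp only [Finsupp.single_apply, Finsupp.neg_apply] at h2
    split_ifs at h2 <;> omega
  have h13 : Disjoint ((Icc (-1:ℤ) (n+1)).image fun k => ga ^ k * gb⁻¹)
      (((Icc (-(n+1)) (n+1)).erase 0).image fun k => gb * ga ^ k * gb⁻¹) := by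
    simp only [Finset.disjoint_left, Finset.mem_image, Finset.mem_erase, Finset.mem_Icc]
    rintro x ⟨k, hk, rfl⟩ ⟨j, ⟨hj0, hj⟩, hx⟩
    have h := congrArg nu hx
    rw [nu_bqb, nu_pbinv, Prod.mk.injEq] at h
    have h2 := fs_eval h.2 j
    simp only [Finsupp.single_apply, Finsupp.sub_apply, Finsupp.neg_apply] at h2
    split_ifs at h2 <;> omega
  have h23 : Disjoint ((Icc (-(n+1)) (1:ℤ)).image fun k => gb * ga ^ k)
      (((Icc (-(n+1)) (n+1)).erase 0).image fun k => gb * ga ^ k * gb⁻¹) := by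
    simp only [Finset.disjoint_left, Finset.mem_image, Finset.mem_erase, Finset.mem_Icc]
    rintro x ⟨k, hk, rfl⟩ ⟨j, ⟨hj0, hj⟩, hx⟩
    have h := congrArg nu hx
    rw [nu_bqb, nu_bq, Prod.mk.injEq] at h
    have h2 := fs_eval h.2 0
    simp only [Finsupp.single_apply, Finsupp.sub_apply] at h2
    split_ifs at h2 <;> omega
  have c0 : (({1, ga, ga⁻¹} : Finset F2).card : ℤ) = 3 := by
    rw [Finset.card_insert_of_notMem (by
          simp only [Finset.mem_insert, Finset.mem_singleton]
          push_neg
          exact ⟨ne_one_ga, ne_one_gainv⟩),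
        Finset.card_insert_of_notMem (by
          simp only [Finset.mem_singleton]
          exact ne_ga_gainv),
        Finset.card_singleton]
    norm_num
  have c1 : (((Icc (-1:ℤ) (n+1)).image fun k => ga ^ k * gb⁻¹).card : ℤ) = n+3 := by
    rw [Finset.card_image_of_injective _ inj_R3, Int.card_Icc]
    omega
  have c2 : (((Icc (-(n+1)) (1:ℤ)).image fun k => gb * ga ^ k).card : ℤ) = n+3 := by
    rw [Finset.card_image_of_injective _ inj_L2, Int.card_Icc]
    omega
  have c3 : ((((Icc (-(n+1)) (n+1)).erase 0).image fun k => gb * ga ^ k * gb⁻¹).card : ℤ)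
      = 2*n+2 := by
    rw [Finset.card_image_of_injective _ inj_L3,
      Finset.card_erase_of_mem (Finset.mem_Icc.2 ⟨by omega, by omega⟩), Int.card_Icc]
    omega
  rw [Lset]
  rw [Finset.card_union_of_disjoint (by
        simp only [Finset.disjoint_union_left]
        exact ⟨⟨h03, h13⟩, h23⟩),
      Finset.card_union_of_disjoint (by
        simp only [Finset.disjoint_union_left]
        exact ⟨h02, h12⟩),
      Finset.card_union_of_disjoint h01]
  push_cast
  omega

end Stmt3Aux


/-- In the free group on two generators, every even integer `2n` is achieved as the
difference `|A * A⁻¹| - |A⁻¹ * A|` for some finite subset `A`. -/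
theorem stmt_3 (n : ℤ) :
    ∃ A : Finset (FreeGroup (Fin 2)),
      ((A * A⁻¹).card : ℤ) - ((A⁻¹ * A).card : ℤ) = 2 * n := by
  rcases le_or_gt 0 n with hn | hn
  · refine ⟨Stmt3Aux.Aset n, ?_⟩
    rw [Stmt3Aux.mulinv_eq hn, Stmt3Aux.invmul_eq hn, Stmt3Aux.card_R hn, Stmt3Aux.card_L hn]
    ring
  · refine ⟨(Stmt3Aux.Aset (-n))⁻¹, ?_⟩
    have hn' : 0 ≤ -n := by omega
    rw [inv_inv, Stmt3Aux.mulinv_eq hn', Stmt3Aux.invmul_eq hn',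
      Stmt3Aux.card_R hn', Stmt3Aux.card_L hn']
    ring
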